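/- Fix positive integers n_1,...,n_k and r with 0 ≤ r. Let S(j_1,...,j_k) = {(a,b) ∈ ℤ² : 1 ≤ a ≤ k, 1 ≤ b ≤ j_a} for a tuple (j_1,...,j_k) with 0 ≤ j_a ≤ n_a and j_1+...+j_k = r. For a permutation σ of S(j_1,...,j_k), call (a,b) a decrease if σ(a,b) = (a',b') with a' < a, and let Dec(σ) be the number of decreases. Then the maximum of Dec(σ) over all permutations σ of S(j_1,...,j_k) equals r − max(j_1,...,j_k). -/

import Mathlib

/-- The number of decreases of a permutation `σ` of `S(j_1,...,j_k)`, where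
`S(j_1,...,j_k)` is modelled as the sigma type `(a : Fin k) × Fin (j a)`:
an element `(a,b)` is a decrease if the first coordinate of `σ (a,b)` is strictly
smaller than `a`. -/
def Dec {k : ℕ} {j : Fin k → ℕ} (σ : Equiv.Perm ((a : Fin k) × Fin (j a))) : ℕ :=
  (Finset.univ.filter (fun x : (a : Fin k) × Fin (j a) => (σ x).1 < x.1)).card

open Finset

/-- `finRotate⁻¹` decreases every element except `0`. -/
lemma finRotate_symm_lt {n : ℕ} (i : Fin (n + 1)) :
    (finRotate (n + 1)).symm i < i ↔ (i : ℕ) ≠ 0 := by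
  set t := (finRotate (n + 1)).symm i with ht
  have h : finRotate (n + 1) t = i := Equiv.apply_symm_apply _ _
  rw [finRotate_succ_apply] at h
  rcases eq_or_ne t (Fin.last n) with h1 | h1
  · rw [h1] at h ⊢
    have hi : i = 0 := by rw [← h, Fin.last_add_one]
    subst hi
    simp [Fin.lt_iff_val_lt_val]
  · have hne : (t : ℕ) ≠ n := fun hh => h1 (Fin.ext (by simpa using hh))
    have hlt : (t : ℕ) < n := by have := t.isLt; omega
    have hv : ((t + 1 : Fin (n + 1)) : ℕ) = (t : ℕ) + 1 := by
      rw [Fin.val_add_one]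
      simp [h1]
    have hi : (i : ℕ) = (t : ℕ) + 1 := by rw [← h, hv]
    rw [Fin.lt_iff_val_lt_val]
    omega

section Chain

variable {α : Type*} [Fintype α] [LinearOrder α]

/-- The "rotate down" permutation on a finite linear order. -/
noncomputable def chainPerm (α : Type*) [Fintype α] [LinearOrder α] : Equiv.Perm α :=
  ((monoEquivOfFin α rfl).toEquiv.symm).trans
    (((finRotate (Fintype.card α)).symm).trans (monoEquivOfFin α rfl).toEquiv)

lemma card_finRotate_symm (n : ℕ) (hn : n ≠ 0) :
    (univ.filter (fun i : Fin n => (finRotate n).symm i < i)).card = n - 1 := by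
  obtain ⟨m, rfl⟩ := Nat.exists_eq_succ_of_ne_zero hn
  have h1 : (univ.filter (fun i : Fin (m + 1) => (finRotate (m + 1)).symm i < i))
      = univ.filter (fun i : Fin (m + 1) => i ≠ 0) := by
    apply filter_congr
    intro i _
    rw [finRotate_symm_lt]
    exact ⟨fun h h' => h (by simp [h']), fun h h' => h (Fin.ext (by simpa using h'))⟩
  rw [h1, filter_ne', card_erase_of_mem (mem_univ _)]
  simp

lemma card_chainPerm_lt [Nonempty α] :
    (univ.filter (fun x => chainPerm α x < x)).card = Fintype.card α - 1 := by
  classical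
  rw [← card_finRotate_symm (Fintype.card α) Fintype.card_ne_zero]
  apply Finset.card_equiv (monoEquivOfFin α rfl).toEquiv.symm
  intro x
  simp only [mem_filter, mem_univ, true_and]
  have h1 : chainPerm α x
      = (monoEquivOfFin α rfl)
        ((finRotate (Fintype.card α)).symm ((monoEquivOfFin α rfl).toEquiv.symm x)) := rfl
  rw [h1]
  constructor
  · intro h
    have := (monoEquivOfFin α rfl).symm.lt_iff_lt.mpr h
    simpa using this
  · intro h
    have := (monoEquivOfFin α rfl).lt_iff_lt.mpr h
    simpa using this

end Chain


section Upper

variable {k : ℕ} {j : Fin k → ℕ}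

/-- Transfer a filter-cardinality along the permutation `σ`. -/
lemma card_filter_comp {α : Type*} [Fintype α] [DecidableEq α] (σ : Equiv.Perm α)
    (p : α → Prop) [DecidablePred p] :
    (univ.filter (fun x => p (σ x))).card = (univ.filter p).card := by
  apply Finset.card_equiv σ
  intro x
  simp

lemma fiber_card (a : Fin k) :
    (univ.filter (fun x : (a' : Fin k) × Fin (j a') => x.1 = a)).card = j a := by
  classical
  rw [Finset.card_filter, ← Finset.univ_sigma_univ, Finset.sum_sigma]
  have h : ∀ a' : Fin k, (∑ b : Fin (j a'),
      if (⟨a', b⟩ : (a' : Fin k) × Fin (j a')).1 = a then 1 else 0)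
      = if a' = a then j a' else 0 := by
    intro a'
    by_cases h : a' = a <;> simp [h]
  rw [Finset.sum_congr rfl (fun a' _ => h a')]
  simp

lemma le_card_nondec (σ : Equiv.Perm ((a : Fin k) × Fin (j a))) (a : Fin k) :
    j a ≤ (univ.filter
      (fun x : (a : Fin k) × Fin (j a) => x.1 ≤ (σ x).1)).card := by
  classical
  set N := univ.filter (fun x : (a : Fin k) × Fin (j a) => x.1 ≤ (σ x).1) with hN
  set A1 := univ.filter (fun x : (a' : Fin k) × Fin (j a') => x.1 ≤ a ∧ (σ x).1 ≤ a) with hA1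
  set U := univ.filter (fun x : (a' : Fin k) × Fin (j a') => x.1 ≤ a ∧ ¬ (σ x).1 ≤ a) with hU
  set D := univ.filter (fun x : (a' : Fin k) × Fin (j a') => ¬ x.1 ≤ a ∧ (σ x).1 ≤ a) with hD
  set F1 := univ.filter (fun x : (a' : Fin k) × Fin (j a') => x.1 ≤ a ∧ (σ x).1 = a) with hF1
  set F2 := univ.filter (fun x : (a' : Fin k) × Fin (j a') => ¬ x.1 ≤ a ∧ (σ x).1 = a) with hF2
  -- split card of filter (x.1 ≤ a)
  have hp : A1.card + U.card = (univ.filter (fun x : (a' : Fin k) × Fin (j a') => x.1 ≤ a)).card := by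
    rw [hA1, hU, ← Finset.filter_filter, ← Finset.filter_filter]
    exact Finset.card_filter_add_card_filter_not _
  have hq : A1.card + D.card = (univ.filter (fun x : (a' : Fin k) × Fin (j a') => (σ x).1 ≤ a)).card := by
    have h1 : A1 = univ.filter (fun x : (a' : Fin k) × Fin (j a') => (σ x).1 ≤ a ∧ x.1 ≤ a) := by
      rw [hA1]; apply filter_congr; intro x _; exact Iff.symm and_comm
    have h2 : D = univ.filter (fun x : (a' : Fin k) × Fin (j a') => (σ x).1 ≤ a ∧ ¬ x.1 ≤ a) := by
      rw [hD]; apply filter_congr; intro x _; exact Iff.symm and_comm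
    rw [h1, h2, ← Finset.filter_filter, ← Finset.filter_filter]
    exact Finset.card_filter_add_card_filter_not _
  have hpq : (univ.filter (fun x : (a' : Fin k) × Fin (j a') => (σ x).1 ≤ a)).card
      = (univ.filter (fun x : (a' : Fin k) × Fin (j a') => x.1 ≤ a)).card :=
    card_filter_comp σ (fun x : (a' : Fin k) × Fin (j a') => x.1 ≤ a)
  have hUD : U.card = D.card := by omega
  -- split card of fiber preimage
  have hfib : F1.card + F2.card = j a := by
    have h1 : F1 = univ.filter (fun x : (a' : Fin k) × Fin (j a') => (σ x).1 = a ∧ x.1 ≤ a) := by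
      rw [hF1]; apply filter_congr; intro x _; exact Iff.symm and_comm
    have h2 : F2 = univ.filter (fun x : (a' : Fin k) × Fin (j a') => (σ x).1 = a ∧ ¬ x.1 ≤ a) := by
      rw [hF2]; apply filter_congr; intro x _; exact Iff.symm and_comm
    rw [h1, h2, ← Finset.filter_filter, ← Finset.filter_filter,
      Finset.card_filter_add_card_filter_not,
      card_filter_comp σ (fun x : (a' : Fin k) × Fin (j a') => x.1 = a)]
    exact fiber_card a
  have hF2D : F2.card ≤ D.card := by
    apply Finset.card_le_card
    rw [hF2, hD]
    apply Finset.monotone_filter_right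
    intro x _ hx
    exact ⟨hx.1, le_of_eq hx.2⟩
  have hsub : F1 ∪ U ⊆ N := by
    intro x hx
    rw [Finset.mem_union, hF1, hU] at hx
    rw [hN, mem_filter]
    rcases hx with hx | hx <;> rw [mem_filter] at hx
    · exact ⟨mem_univ _, hx.2.2 ▸ hx.2.1⟩
    · exact ⟨mem_univ _, le_of_lt (lt_of_le_of_lt hx.2.1 (lt_of_not_ge hx.2.2))⟩
  have hdisj : Disjoint F1 U := by
    rw [Finset.disjoint_left]
    intro x hx1 hx2
    rw [hF1, mem_filter] at hx1
    rw [hU, mem_filter] at hx2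
    exact hx2.2.2 (le_of_eq hx1.2.2)
  have hcard : F1.card + U.card ≤ N.card := by
    rw [← Finset.card_union_of_disjoint hdisj]
    exact Finset.card_le_card hsub
  omega

end Upper

theorem max_dec_eq (k r : ℕ) (n : Fin k → ℕ) (hn : ∀ a, 0 < n a)
    (j : Fin k → ℕ) (hj : ∀ a, j a ≤ n a) (hr : ∑ a, j a = r) :
    (∀ σ : Equiv.Perm ((a : Fin k) × Fin (j a)), Dec σ ≤ r - Finset.univ.sup j) ∧
    (∃ σ : Equiv.Perm ((a : Fin k) × Fin (j a)), Dec σ = r - Finset.univ.sup j) := by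
  classical
  have hcardT : Fintype.card ((a : Fin k) × Fin (j a)) = r := by
    rw [Fintype.card_sigma]; simpa using hr
  set m := Finset.univ.sup j with hm
  constructor
  · intro σ
    have hsplit : Dec σ
        + (univ.filter (fun x : (a : Fin k) × Fin (j a) => x.1 ≤ (σ x).1)).card = r := by
      rw [Dec]
      have h1 : (univ.filter (fun x : (a : Fin k) × Fin (j a) => x.1 ≤ (σ x).1))
          = univ.filter (fun x : (a : Fin k) × Fin (j a) => ¬ (σ x).1 < x.1) := by
        apply filter_congr; intro x _; simp [not_lt]
      rw [h1, Finset.card_filter_add_card_filter_not, ← hcardT, Finset.card_univ]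
    have hNle : m ≤ (univ.filter
        (fun x : (a : Fin k) × Fin (j a) => x.1 ≤ (σ x).1)).card :=
      Finset.sup_le fun a _ => le_card_nondec σ a
    omega
  · have hSne : ∀ b : Fin m, Nonempty {a : Fin k // (b : ℕ) < j a} := by
      intro b
      have hb : (b : ℕ) < Finset.univ.sup j := hm ▸ b.isLt
      obtain ⟨a, -, ha⟩ := Finset.lt_sup_iff.mp hb
      exact ⟨⟨a, ha⟩⟩
    let E : ((a : Fin k) × Fin (j a)) ≃ ((b : Fin m) × {a : Fin k // (b : ℕ) < j a}) :=
      { toFun := fun x =>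
          ⟨⟨x.2, lt_of_lt_of_le x.2.isLt (Finset.le_sup (mem_univ x.1))⟩, ⟨x.1, x.2.isLt⟩⟩
        invFun := fun y => ⟨y.2.1, ⟨y.1.1, y.2.2⟩⟩
        left_inv := fun x => rfl
        right_inv := fun y => rfl }
    have : ∀ b : Fin m, Nonempty {a : Fin k // (b : ℕ) < j a} := hSne
    let σ' : Equiv.Perm ((b : Fin m) × {a : Fin k // (b : ℕ) < j a}) :=
      Equiv.sigmaCongrRight (fun b : Fin m => chainPerm {a : Fin k // (b : ℕ) < j a})
    refine ⟨(E.trans σ').trans E.symm, ?_⟩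
    rw [Dec]
    have htrans : (univ.filter (fun x : (a : Fin k) × Fin (j a) =>
          (((E.trans σ').trans E.symm) x).1 < x.1)).card
        = (univ.filter (fun y : (b : Fin m) × {a : Fin k // (b : ℕ) < j a} =>
            chainPerm {a : Fin k // ((y.1 : Fin m) : ℕ) < j a} y.2 < y.2)).card := by
      apply Finset.card_equiv E
      intro x
      simp only [mem_filter, mem_univ, true_and]
      obtain ⟨a, b⟩ := x
      simp only [Equiv.trans_apply, σ', Equiv.sigmaCongrRight_apply]
      simp only [E, Equiv.coe_fn_mk, Equiv.coe_fn_symm_mk]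
      exact Iff.rfl
    rw [htrans]
    have hsig : (univ.filter (fun y : (b : Fin m) × {a : Fin k // (b : ℕ) < j a} =>
            chainPerm {a : Fin k // ((y.1 : Fin m) : ℕ) < j a} y.2 < y.2)).card
        = ∑ b : Fin m, (univ.filter
            (fun s : {a : Fin k // (b : ℕ) < j a} =>
              chainPerm {a : Fin k // (b : ℕ) < j a} s < s)).card := by
      rw [Finset.card_filter, ← Finset.univ_sigma_univ, Finset.sum_sigma]
      exact Finset.sum_congr rfl (fun b _ => (Finset.card_filter _ _).symm)
    rw [hsig]
    have hfibcard : ∀ b : Fin m, (univ.filter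
            (fun s : {a : Fin k // (b : ℕ) < j a} =>
              chainPerm {a : Fin k // (b : ℕ) < j a} s < s)).card
        = Fintype.card {a : Fin k // (b : ℕ) < j a} - 1 := by
      intro b
      haveI := hSne b
      exact card_chainPerm_lt
    rw [Finset.sum_congr rfl (fun b _ => hfibcard b)]
    have hpos : ∀ b : Fin m, 1 ≤ Fintype.card {a : Fin k // (b : ℕ) < j a} := by
      intro b
      haveI := hSne b
      exact Fintype.card_pos
    have hsum : ∑ b : Fin m, Fintype.card {a : Fin k // (b : ℕ) < j a} = r := by
      have h1 : ∀ b : Fin m, Fintype.card {a : Fin k // (b : ℕ) < j a}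
          = (univ.filter (fun a : Fin k => (b : ℕ) < j a)).card := fun b =>
        Fintype.card_subtype _
      rw [Finset.sum_congr rfl (fun b _ => h1 b)]
      rw [Fin.sum_univ_eq_sum_range (fun b => (univ.filter (fun a : Fin k => b < j a)).card) m]
      have h2 : ∀ b ∈ Finset.range m, (univ.filter (fun a : Fin k => b < j a)).card
          = ∑ a : Fin k, if b < j a then 1 else 0 := fun b _ => Finset.card_filter _ _
      rw [Finset.sum_congr rfl h2, Finset.sum_comm]
      have h3 : ∀ a : Fin k, (∑ b ∈ Finset.range m, if b < j a then 1 else 0) = j a := by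
        intro a
        have hja : j a ≤ m := Finset.le_sup (mem_univ a)
        rw [← Finset.card_filter]
        have : Finset.filter (fun b => b < j a) (Finset.range m) = Finset.range (j a) := by
          ext b
          simp only [Finset.mem_filter, Finset.mem_range]
          omega
        rw [this, Finset.card_range]
      rw [Finset.sum_congr rfl (fun a _ => h3 a)]
      exact hr
    have h4 : ∑ b : Fin m, (Fintype.card {a : Fin k // (b : ℕ) < j a} - 1)
        + ∑ _b : Fin m, (1 : ℕ) = ∑ b : Fin m, Fintype.card {a : Fin k // (b : ℕ) < j a} := by
      rw [← Finset.sum_add_distrib]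
      exact Finset.sum_congr rfl (fun b _ => by have := hpos b; omega)
    have h5 : ∑ _b : Fin m, (1 : ℕ) = m := by simp
    omega
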